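/- For every parameter valuation v, the Cumulative NDFS algorithm returns a set Accepted containing v if and only if the input graph contains an accepting cycle under the valuation v reachable from the initial state. -/

import Mathlib

namespace PTASynth

open Relation

variable {L P : Type} {n : ℕ} [Fintype P]

/-! ### Affine expressions over parameters -/

/-- Affine expressions `z₀ + z₁p₁ + … + zₘpₘ` with integer coefficients. -/
structure AffExpr (P : Type) where
  const : ℤ
  coef : P → ℤ

noncomputable def AffExpr.eval (e : AffExpr P) (v : P → ℤ) : ℤ :=
  e.const + ∑ p, e.coef p * v p

instance : Add (AffExpr P) :=
  ⟨fun e f => ⟨e.const + f.const, fun p => e.coef p + f.coef p⟩⟩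

def AffExpr.ofInt (z : ℤ) : AffExpr P := ⟨z, fun _ => 0⟩

open Classical in
noncomputable def AffExpr.var (p : P) : AffExpr P :=
  ⟨0, fun q => if q = p then 1 else 0⟩

/-- `max_{lb,ub}(e)`: replace positively occurring parameters by their upper bound and
negatively occurring ones by their lower bound. -/
noncomputable def AffExpr.maxVal (e : AffExpr P) (lb ub : P → ℤ) : ℤ :=
  e.const + ∑ p, (if 0 ≤ e.coef p then e.coef p * ub p else e.coef p * lb p)

/-- Extended affine expressions: `none` denotes `∞`. -/
abbrev EExpr (P : Type) := Option (AffExpr P)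

noncomputable def EExpr.eval (e : EExpr P) (v : P → ℤ) : WithTop ℤ :=
  match e with
  | none => ⊤
  | some e => (AffExpr.eval e v : WithTop ℤ)

def EExpr.add : EExpr P → EExpr P → EExpr P
  | some e, some f => some (e + f)
  | _, _ => none

/-! ### Parameter constraints -/

/-- Relation symbols for parameter constraints. -/
inductive CRel | lt | le | ge | gt
deriving DecidableEq

def CRel.holds : CRel → WithTop ℤ → WithTop ℤ → Prop
  | .lt, a, b => a < b
  | .le, a, b => a ≤ b
  | .ge, a, b => b ≤ a
  | .gt, a, b => b < a

def CRel.negRel : CRel → CRel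
  | .lt => .ge
  | .le => .gt
  | .ge => .lt
  | .gt => .le

/-- A parameter constraint `e ∼ e'`. -/
structure Constr (P : Type) where
  lhs : EExpr P
  rel : CRel
  rhs : EExpr P

def Constr.neg (c : Constr P) : Constr P := ⟨c.lhs, c.rel.negRel, c.rhs⟩

def Constr.sat (c : Constr P) (v : P → ℤ) : Prop :=
  c.rel.holds (EExpr.eval c.lhs v) (EExpr.eval c.rhs v)

/-- `⟦C⟧`: the set of parameter valuations satisfying a constraint set. -/
def csem (C : Set (Constr P)) : Set (P → ℤ) :=
  {v | ∀ c ∈ C, c.sat v}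

/-- `C ⊨ c`: the constraint `c` covers the constraint set `C`. -/
def Covers (C : Set (Constr P)) (c : Constr P) : Prop :=
  ∀ v ∈ csem C, c.sat v

/-! ### Clock valuations -/

/-- Clock valuations over clocks `Fin (n+1)`, clock `0` is the zero clock `x₀`. -/
structure ClockVal (n : ℕ) where
  val : Fin (n + 1) → ℝ
  zero_eq : val 0 = 0
  nonneg : ∀ x, 0 ≤ val x

def ClockVal.zeroVal (n : ℕ) : ClockVal n := ⟨fun _ => 0, rfl, fun _ => le_refl 0⟩

open Classical in
/-- `η⟨R⟩`: reset the clocks in `R` to `0`. -/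
noncomputable def ClockVal.reset (η : ClockVal n) (R : Set (Fin (n + 1))) : ClockVal n where
  val x := if x = 0 ∨ x ∈ R then 0 else η.val x
  zero_eq := by simp
  nonneg x := by
    split
    · exact le_rfl
    · exact η.nonneg x

/-! ### Guards -/

/-- A bound `(≺, e)` with `≺ ∈ {≤, <}` (`true` means `≤`) and `e ∈ E(P) ∪ {∞}`. -/
abbrev Bnd (P : Type) := Bool × EExpr P

def Bnd.sat (b : Bnd P) (v : P → ℤ) (r : ℝ) : Prop :=
  match b.2 with
  | none => True
  | some e => if b.1 then r ≤ (AffExpr.eval e v : ℝ) else r < (AffExpr.eval e v : ℝ)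

/-- An atomic guard `xᵢ - xⱼ ≺ e`. -/
structure Atom (n : ℕ) (P : Type) where
  i : Fin (n + 1)
  j : Fin (n + 1)
  le : Bool
  e : EExpr P

/-- A guard is a finite conjunction of atomic guards. -/
abbrev Guard (n : ℕ) (P : Type) := List (Atom n P)

def Atom.sat (a : Atom n P) (v : P → ℤ) (η : ClockVal n) : Prop :=
  Bnd.sat (a.le, a.e) v (η.val a.i - η.val a.j)

def Guard.sat (g : Guard n P) (v : P → ℤ) (η : ClockVal n) : Prop :=
  ∀ a ∈ g, a.sat v η

/-- Simple guards: one of the compared clocks is the zero clock and the bound is finite. -/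
def Atom.Simple (a : Atom n P) : Prop := (a.i = 0 ∨ a.j = 0) ∧ a.e ≠ none

def Guard.Simple (g : Guard n P) : Prop := ∀ a ∈ g, a.Simple

/-! ### Parametric timed (Büchi) automata -/

/-- A parametric timed automaton. -/
structure PTA (L : Type) (n : ℕ) (P : Type) where
  l0 : L
  trans : Set (L × Guard n P × Set (Fin (n + 1)) × L)
  Inv : L → Guard n P
  simple_trans : ∀ t ∈ trans, Guard.Simple t.2.1
  simple_Inv : ∀ l, Guard.Simple (Inv l)

/-- A parametric timed Büchi automaton. -/
structure PTBA (L : Type) (n : ℕ) (P : Type) extends PTA L n P where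
  F : Set L

/-! ### Concrete semantics `⟦A⟧_v` -/

abbrev CState (L : Type) (n : ℕ) := L × ClockVal n

/-- Delay transition `(l,η) →^d (l,η+d)`. -/
def DelayStep (M : PTA L n P) (v : P → ℤ) (s : CState L n) (d : ℝ) (s' : CState L n) : Prop :=
  s'.1 = s.1 ∧ 0 ≤ d ∧ (∀ x : Fin (n + 1), x ≠ 0 → s'.2.val x = s.2.val x + d) ∧
    Guard.sat (M.Inv s'.1) v s'.2

/-- Action transition `(l,η) →^act (l',η⟨R⟩)`. -/
def ActStep (M : PTA L n P) (v : P → ℤ) (s s' : CState L n) : Prop :=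
  ∃ g R, (s.1, g, R, s'.1) ∈ M.trans ∧ Guard.sat g v s.2 ∧
    s'.2 = s.2.reset R ∧ Guard.sat (M.Inv s'.1) v s'.2

/-- `s →^{act}_d s'`: an action transition followed by a delay transition. -/
def ActD (M : PTA L n P) (v : P → ℤ) (s s' : CState L n) : Prop :=
  ∃ s'' d, ActStep M v s s'' ∧ DelayStep M v s'' d s'

/-- `s →^{act₁,…,act_k}_d s'`: composition of `→^{act}_d` steps where each step is
labelled by the location of its source state. -/
def ActDSeq (M : PTA L n P) (v : P → ℤ) : List L → CState L n → CState L n → Prop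
  | [], s, s' => s = s'
  | l :: ls, s, s' => ∃ s'', s.1 = l ∧ ActD M v s s'' ∧ ActDSeq M v ls s'' s'

/-- `s (→^{act₁,…,act_k}_d)* s'`: one or more iterations of `→^{act₁,…,act_k}_d`. -/
def ActDSeqPlus (M : PTA L n P) (v : P → ℤ) (acts : List L) :
    CState L n → CState L n → Prop :=
  TransGen (ActDSeq M v acts)

/-! ### Time-abstracting simulations -/

def IsTASim (M : PTA L n P) (v : P → ℤ) (R : CState L n → CState L n → Prop) : Prop :=
  (∀ s1 s2 s1', R s1 s2 → ActStep M v s1 s1' →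
      ∃ s2', ActStep M v s2 s2' ∧ R s1' s2') ∧
  (∀ s1 s2 s1' (d1 : ℝ), R s1 s2 → DelayStep M v s1 d1 s1' →
      ∃ d2 s2', DelayStep M v s2 d2 s2' ∧ R s1' s2')

def IsTABisim (M : PTA L n P) (v : P → ℤ) (R : CState L n → CState L n → Prop) : Prop :=
  IsTASim M v R ∧ IsTASim M v (flip R)

/-- `s ≼ s'`: some time-abstracting simulation relates `s` to `s'`. -/
def Sim (M : PTA L n P) (v : P → ℤ) (s s' : CState L n) : Prop :=
  ∃ R, IsTASim M v R ∧ R s s'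

/-! ### Runs of `⟦A⟧_v` -/

/-- A proper run: an infinite alternating sequence of delay and action transitions,
beginning with a delay, starting in the initial state. -/
def ProperRun (A : PTBA L n P) (v : P → ℤ) (s : ℕ → CState L n) (d : ℕ → ℝ) : Prop :=
  s 0 = (A.l0, ClockVal.zeroVal n) ∧
  ∀ i, ∃ s', DelayStep A.toPTA v (s i) (d i) s' ∧ ActStep A.toPTA v s' (s (i + 1))

def AcceptingRun (A : PTBA L n P) (v : P → ℤ) (s : ℕ → CState L n) (d : ℕ → ℝ) : Prop :=
  ProperRun A v s d ∧ ∀ N, ∃ i, N ≤ i ∧ (s i).1 ∈ A.F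

/-- A run is Zeno if the sum of all its delays is finite (bounded). -/
def ZenoD (d : ℕ → ℝ) : Prop := ∃ B : ℝ, ∀ N, ∑ i ∈ Finset.range N, d i ≤ B

def HasAccRun (A : PTBA L n P) (v : P → ℤ) : Prop := ∃ s d, AcceptingRun A v s d

/-- The PTBA has no Zeno accepting runs. -/
def NoZeno (A : PTBA L n P) : Prop :=
  ∀ (v : P → ℤ) s d, AcceptingRun A v s d → ¬ ZenoD d

/-! ### (Constrained) parametric difference bound matrices -/

/-- A parametric difference bound matrix. -/
abbrev PDBM (n : ℕ) (P : Type) := Fin (n + 1) → Fin (n + 1) → Bnd P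

/-- `⟦D⟧_v`. -/
def PDBM.sem (D : PDBM n P) (v : P → ℤ) : Set (ClockVal n) :=
  {η | ∀ i j, Bnd.sat (D i j) v (η.val i - η.val j)}

/-- A constrained PDBM `(C, D)`. -/
abbrev CPDBM (n : ℕ) (P : Type) := Set (Constr P) × PDBM n P

/-- `⟦C,D⟧ = {(v,η) | v ∈ ⟦C⟧ ∧ η ∈ ⟦D⟧_v}`. -/
def CPDBM.sem (cd : CPDBM n P) : Set ((P → ℤ) × ClockVal n) :=
  {p | p.1 ∈ csem cd.1 ∧ p.2 ∈ PDBM.sem cd.2 p.1}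

open Classical in
noncomputable def PDBM.upd (D : PDBM n P) (i j : Fin (n + 1)) (b : Bnd P) : PDBM n P :=
  fun i' j' => if i' = i ∧ j' = j then b else D i' j'

/-- The constraint `e_ij (≺_ij ⟹ ≺) e` used when applying the guard atom
`x_i - x_j ≺ e` to a PDBM. -/
def atomConstr (D : PDBM n P) (a : Atom n P) : Constr P :=
  ⟨(D a.i a.j).2, if !(D a.i a.j).1 || a.le then CRel.le else CRel.lt, a.e⟩

/-- Applying a guard atom to a constrained PDBM (possibly splitting the constraint set). -/
inductive ApplyAtom : CPDBM n P → Atom n P → CPDBM n P → Prop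
  | keep (C : Set (Constr P)) (D : PDBM n P) (a : Atom n P) :
      Covers C (atomConstr D a) → ApplyAtom (C, D) a (C, D)
  | repl (C : Set (Constr P)) (D : PDBM n P) (a : Atom n P) :
      Covers C (atomConstr D a).neg →
      ApplyAtom (C, D) a (C, PDBM.upd D a.i a.j (a.le, a.e))
  | splitKeep (C : Set (Constr P)) (D : PDBM n P) (a : Atom n P) :
      ¬ Covers C (atomConstr D a) → ¬ Covers C (atomConstr D a).neg →
      ApplyAtom (C, D) a (insert (atomConstr D a) C, D)
  | splitRepl (C : Set (Constr P)) (D : PDBM n P) (a : Atom n P) :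
      ¬ Covers C (atomConstr D a) → ¬ Covers C (atomConstr D a).neg →
      ApplyAtom (C, D) a (insert (atomConstr D a).neg C, PDBM.upd D a.i a.j (a.le, a.e))

/-- Applying a conjunction of guard atoms. -/
inductive ApplyGuard : CPDBM n P → Guard n P → CPDBM n P → Prop
  | nil (cd : CPDBM n P) : ApplyGuard cd [] cd
  | cons {cd cd' cd'' : CPDBM n P} {a : Atom n P} {g : Guard n P} :
      ApplyAtom cd a cd' → ApplyGuard cd' g cd'' → ApplyGuard cd (a :: g) cd''

open Classical in
/-- `D⟨R⟩`: resetting a set of clocks. -/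
noncomputable def PDBM.reset (D : PDBM n P) (R : Set (Fin (n + 1))) : PDBM n P :=
  fun i j =>
    if i = j then D i j
    else D (if i ∈ R then 0 else i) (if j ∈ R then 0 else j)

open Classical in
/-- `D↑`: the time successor (remove all upper bounds on clocks). -/
noncomputable def PDBM.up (D : PDBM n P) : PDBM n P :=
  fun i j => if i ≠ 0 ∧ j = 0 then ((false : Bool), (none : EExpr P)) else D i j

/-- The guard atom `x_i - x_j (≺_ik ∧ ≺_kj) (e_ik + e_kj)` used by the parametric
Floyd–Warshall canonisation. -/
def fwAtom (D : PDBM n P) (k i j : Fin (n + 1)) : Atom n P :=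
  ⟨i, j, (D i k).1 && (D k j).1, EExpr.add (D i k).2 (D k j).2⟩

/-- One step of the nondeterministic parametric Floyd–Warshall algorithm. -/
inductive FWStep : ℕ × ℕ × ℕ × CPDBM n P → ℕ × ℕ × ℕ × CPDBM n P → Prop
  | relax (k i j : Fin (n + 1)) (cd cd' : CPDBM n P) :
      ApplyAtom cd (fwAtom cd.2 k i j) cd' →
      FWStep ((k : ℕ), (i : ℕ), (j : ℕ), cd) ((k : ℕ), (i : ℕ), (j : ℕ) + 1, cd')
  | nextI (k i : Fin (n + 1)) (cd : CPDBM n P) :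
      FWStep ((k : ℕ), (i : ℕ), n + 1, cd) ((k : ℕ), (i : ℕ) + 1, 0, cd)
  | nextK (k : Fin (n + 1)) (cd : CPDBM n P) :
      FWStep ((k : ℕ), n + 1, 0, cd) ((k : ℕ) + 1, 0, 0, cd)

/-- `(C',D') ∈ (C,D)_c`: membership in the canonical set. -/
def Canon (cd cd' : CPDBM n P) : Prop :=
  ReflTransGen FWStep (0, 0, 0, cd) (n + 1, 0, 0, cd')

/-! ### Symbolic semantics `⟦A⟧` -/

abbrev SymState (L : Type) (n : ℕ) (P : Type) := L × CPDBM n P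

/-- The symbolic transition relation `⟹` of `⟦A⟧`. -/
def SymStep (A : PTBA L n P) (S S' : SymState L n P) : Prop :=
  ∃ g R, (S.1, g, R, S'.1) ∈ A.trans ∧
    ∃ cd1 cd2 cd3, ApplyGuard S.2 g cd1 ∧ Canon cd1 cd2 ∧
      ApplyGuard (cd2.1, PDBM.up (PDBM.reset cd2.2 R)) (A.Inv S'.1) cd3 ∧ Canon cd3 S'.2

/-- The constraints `lb(p) ≤ p ≤ ub(p)` for all parameters `p`. -/
noncomputable def boundC (lb ub : P → ℤ) : Set (Constr P) :=
  {c | ∃ p : P, c = ⟨some (AffExpr.var p), CRel.ge, some (AffExpr.ofInt (lb p))⟩ ∨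
                c = ⟨some (AffExpr.var p), CRel.le, some (AffExpr.ofInt (ub p))⟩}

/-- The PDBM with all entries `(0, ≤)`. -/
def E0 (n : ℕ) (P : Type) : PDBM n P := fun _ _ => ((true : Bool), some (AffExpr.ofInt 0))

/-- The initial symbolic states of `⟦A⟧`. -/
def SymInit (A : PTBA L n P) (lb ub : P → ℤ) : Set (SymState L n P) :=
  {S | S.1 = A.l0 ∧ ApplyGuard (boundC lb ub, PDBM.up (E0 n P)) (A.Inv A.l0) S.2}

/-- The (reachable) symbolic states of `⟦A⟧`. -/
def SymStates (A : PTBA L n P) (lb ub : P → ℤ) : Set (SymState L n P) :=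
  {S | ∃ S0 ∈ SymInit A lb ub, ReflTransGen (SymStep A) S0 S}

/-- `s ∈_v S`: the concrete state `s` is contained in the symbolic state `S` under `v`. -/
def InV (v : P → ℤ) (s : CState L n) (S : SymState L n P) : Prop :=
  s.1 = S.1 ∧ v ∈ csem S.2.1 ∧ s.2 ∈ PDBM.sem S.2.2 v

/-! ### Abstractions -/

abbrev Abstr (L : Type) (n : ℕ) (P : Type) := SymState L n P → Set (SymState L n P)

/-- `α` is an abstraction over `⟦A⟧`. -/
def IsAbstraction (A : PTBA L n P) (α : Abstr L n P) : Prop :=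
  (∀ S Q, Q ∈ α S → Q.1 = S.1 ∧ csem Q.2.1 ⊆ csem S.2.1 ∧
      CPDBM.sem (Q.2.1, S.2.2) ⊆ CPDBM.sem Q.2) ∧
  (∀ S Q, Q ∈ α S → ∀ (v : P → ℤ) (s : CState L n), InV v s Q →
      ∃ s', InV v s' S ∧ Sim A.toPTA v s s')

/-- The transition relation `⟹^α` of the induced transition system `⟦A⟧^α`. -/
def AbsStep (A : PTBA L n P) (α : Abstr L n P) (Q Q' : SymState L n P) : Prop :=
  ∃ S, SymStep A Q S ∧ Q' ∈ α S

/-- The initial states of `⟦A⟧^α`. -/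
def AbsInit (A : PTBA L n P) (lb ub : P → ℤ) (α : Abstr L n P) : Set (SymState L n P) :=
  {Q | ∃ S ∈ SymInit A lb ub, Q ∈ α S}

/-- The states of `⟦A⟧^α`. -/
def AbsStates (A : PTBA L n P) (lb ub : P → ℤ) (α : Abstr L n P) : Set (SymState L n P) :=
  {Q | ∃ Q0 ∈ AbsInit A lb ub α, ReflTransGen (AbsStep A α) Q0 Q}

/-- The semantic content `(l, ⟦C⟧, ⟦C,D⟧)` of a symbolic state. -/
def semClass (Q : SymState L n P) : L × Set (P → ℤ) × Set ((P → ℤ) × ClockVal n) :=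
  (Q.1, csem Q.2.1, CPDBM.sem Q.2)

/-- `α` is a finite abstraction: the induced state space is finite (up to semantics). -/
def FiniteAbs (A : PTBA L n P) (lb ub : P → ℤ) (α : Abstr L n P) : Prop :=
  (semClass '' AbsStates A lb ub α).Finite

/-- There is an accepting run of `⟦A⟧^α` respecting `v`. -/
def AbsAccRun (A : PTBA L n P) (lb ub : P → ℤ) (α : Abstr L n P) (v : P → ℤ) : Prop :=
  ∃ ρ : ℕ → SymState L n P, ρ 0 ∈ AbsInit A lb ub α ∧
    (∀ i, AbsStep A α (ρ i) (ρ (i + 1))) ∧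
    (∀ i, v ∈ csem (ρ i).2.1) ∧
    (∀ N, ∃ i, N ≤ i ∧ (ρ i).1 ∈ A.F)

/-- `Q ⟹^α … ⟹^α Q'` via transitions labelled by the locations of their source states. -/
def AbsSeq (A : PTBA L n P) (α : Abstr L n P) :
    List L → SymState L n P → SymState L n P → Prop
  | [], Q, Q' => Q = Q'
  | l :: ls, Q, Q'' => ∃ Q', Q.1 = l ∧ AbsStep A α Q Q' ∧ AbsSeq A α ls Q' Q''

/-! ### The pk-extrapolation -/

def guardsOf (A : PTBA L n P) : Set (Guard n P) :=
  {g | (∃ t ∈ A.trans, t.2.1 = g) ∨ (∃ l, A.Inv l = g)}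

/-- The affine expressions compared with the clock `x` in a guard or invariant of `A`. -/
def comparedWith (A : PTBA L n P) (x : Fin (n + 1)) : Set (AffExpr P) :=
  {e | ∃ g ∈ guardsOf A, ∃ a ∈ g, (a.i = x ∨ a.j = x) ∧ a.e = some e}

/-- `M(x)`: the maximal constant with which the clock `x` is compared. -/
noncomputable def Mmax (A : PTBA L n P) (lb ub : P → ℤ) (x : Fin (n + 1)) : ℤ :=
  sSup ((fun e => AffExpr.maxVal e lb ub) '' comparedWith A x)

/-- The four possible ways the pk-extrapolation treats the entry `(i,j)` with maximal
constants `Mi = M(x_i)` and `Mj = M(x_j)`. -/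
def PkEntry (Mi Mj : ℤ) (old new : Bnd P) (c : Constr P) : Prop :=
  (new = old ∧ c = ⟨old.2, CRel.le, some (AffExpr.ofInt Mi)⟩) ∨
  (new = ((false : Bool), (none : EExpr P)) ∧ c = ⟨old.2, CRel.gt, some (AffExpr.ofInt Mi)⟩) ∨
  (new = old ∧ c = ⟨old.2, CRel.ge, some (AffExpr.ofInt (-Mj))⟩) ∨
  (new = ((false : Bool), some (AffExpr.ofInt (-Mj))) ∧
    c = ⟨old.2, CRel.lt, some (AffExpr.ofInt (-Mj))⟩)

/-- The pk-extrapolation `α_pk`. -/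
noncomputable def pkExtra (A : PTBA L n P) (lb ub : P → ℤ) : Abstr L n P :=
  fun S => {Q | Q.1 = S.1 ∧
    ∃ f : Fin (n + 1) → Fin (n + 1) → Bnd P × Constr P,
      (∀ i j, PkEntry (Mmax A lb ub i) (Mmax A lb ub j) (S.2.2 i j) (f i j).1 (f i j).2) ∧
      (∀ i j, Q.2.2 i j = (f i j).1) ∧
      Q.2.1 = S.2.1 ∪ {c | ∃ i j, c = (f i j).2}}

/-! ### Region equivalence -/

/-- The maximal constant to which the clock `x` is compared in `A|v`. -/
noncomputable def cmax (A : PTBA L n P) (v : P → ℤ) (x : Fin (n + 1)) : ℤ :=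
  sSup ((fun e => AffExpr.eval e v) '' comparedWith A x)

/-- The standard region equivalence `≡_{A|v}` on the states of `⟦A⟧_v`. -/
def RegionEquiv (A : PTBA L n P) (v : P → ℤ) (s s' : CState L n) : Prop :=
  s.1 = s'.1 ∧
  (∀ x : Fin (n + 1),
      ((cmax A v x : ℝ) < s.2.val x ∧ (cmax A v x : ℝ) < s'.2.val x) ∨
      (⌊s.2.val x⌋ = ⌊s'.2.val x⌋ ∧ (Int.fract (s.2.val x) = 0 ↔ Int.fract (s'.2.val x) = 0))) ∧
  (∀ x y : Fin (n + 1),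
      s.2.val x ≤ (cmax A v x : ℝ) → s.2.val y ≤ (cmax A v y : ℝ) →
      (Int.fract (s.2.val x) ≤ Int.fract (s.2.val y) ↔
        Int.fract (s'.2.val x) ≤ Int.fract (s'.2.val y)))

/-! ### The Cumulative NDFS algorithm -/

variable {S V : Type}

/-- A finite Büchi graph whose states carry monotone sets of parameter valuations. -/
structure NGraph (S V : Type) where
  succ : S → List S
  init : S
  acc : S → Prop
  C : S → Set V
  mono : ∀ s s', s' ∈ succ s → C s' ⊆ C s

/-- Control frames of the Cumulative NDFS machine. -/
inductive NFrame (S : Type)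
  | callOuter (s : S)
  | outer (s : S) (rest : List S)
  | outerPop (s : S)
  | callInner (s : S)
  | inner (s : S) (rest : List S)

/-- Configurations of the Cumulative NDFS machine. -/
structure NConfig (S V : Type) where
  found : Set V
  outer : Set S
  inner : Set S
  stack : Set S
  ctrl : List (NFrame S)

/-- Small-step semantics of the Cumulative NDFS algorithm. -/
inductive NStep (G : NGraph S V) : NConfig S V → NConfig S V → Prop
  | callOuter (F O I St s k) :
      NStep G ⟨F, O, I, St, .callOuter s :: k⟩
              ⟨F, insert s O, I, insert s St, .outer s (G.succ s) :: k⟩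
  | outerSkip (F O I St s s' rest k) :
      (s' ∈ O ∨ s' ∈ St ∨ G.C s' ⊆ F) →
      NStep G ⟨F, O, I, St, .outer s (s' :: rest) :: k⟩
              ⟨F, O, I, St, .outer s rest :: k⟩
  | outerRec (F O I St s s' rest k) :
      s' ∉ O → s' ∉ St → ¬ G.C s' ⊆ F →
      NStep G ⟨F, O, I, St, .outer s (s' :: rest) :: k⟩
              ⟨F, O, I, St, .callOuter s' :: .outer s rest :: k⟩
  | outerAcc (F O I St s k) :
      G.acc s → ¬ G.C s ⊆ F →
      NStep G ⟨F, O, I, St, .outer s [] :: k⟩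
              ⟨F, O, I, St, .callInner s :: .outerPop s :: k⟩
  | outerDone (F O I St s k) :
      ¬ (G.acc s ∧ ¬ G.C s ⊆ F) →
      NStep G ⟨F, O, I, St, .outer s [] :: k⟩ ⟨F, O, I, St \ {s}, k⟩
  | outerPop (F O I St s k) :
      NStep G ⟨F, O, I, St, .outerPop s :: k⟩ ⟨F, O, I, St \ {s}, k⟩
  | callInner (F O I St s k) :
      NStep G ⟨F, O, I, St, .callInner s :: k⟩
              ⟨F, O, insert s I, St, .inner s (G.succ s) :: k⟩
  | innerFound (F O I St s s' rest k) :
      s' ∈ St →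
      NStep G ⟨F, O, I, St, .inner s (s' :: rest) :: k⟩ ⟨F ∪ G.C s', O, I, St, k⟩
  | innerRec (F O I St s s' rest k) :
      s' ∉ St → s' ∉ I → ¬ G.C s' ⊆ F →
      NStep G ⟨F, O, I, St, .inner s (s' :: rest) :: k⟩
              ⟨F, O, I, St, .callInner s' :: .inner s rest :: k⟩
  | innerSkip (F O I St s s' rest k) :
      s' ∉ St → (s' ∈ I ∨ G.C s' ⊆ F) →
      NStep G ⟨F, O, I, St, .inner s (s' :: rest) :: k⟩ ⟨F, O, I, St, .inner s rest :: k⟩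
  | innerDone (F O I St s k) :
      NStep G ⟨F, O, I, St, .inner s [] :: k⟩ ⟨F, O, I, St, k⟩

/-- The initial configuration of the Cumulative NDFS algorithm. -/
def initConfig (G : NGraph S V) : NConfig S V := ⟨∅, ∅, ∅, ∅, [.callOuter G.init]⟩

/-- The edge relation of the graph. -/
def Edge (G : NGraph S V) (s s' : S) : Prop := s' ∈ G.succ s

/-- One edge of a cycle under the valuation `v`: both endpoints carry `v`. -/
def StepUnder (G : NGraph S V) (v : V) (s s' : S) : Prop :=
  s' ∈ G.succ s ∧ v ∈ G.C s ∧ v ∈ G.C s'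

/-- The step from `c` to `c'` backtracks (in `OuterDFS`) from the state `q`. -/
def Backtracks (G : NGraph S V) (q : S) (c c' : NConfig S V) : Prop :=
  NStep G c c' ∧
    ((∃ k, c.ctrl = NFrame.outer q [] :: k ∧ c'.ctrl = k) ∨
     (∃ k, c.ctrl = NFrame.outerPop q :: k))


/-! ### Auxiliary machinery for the proof of Statement 18 -/

section NDFSCorrectness

private lemma nMonoRtg (G : NGraph S V) {a b : S} (h : ReflTransGen (Edge G) a b) :
    G.C b ⊆ G.C a := by
  induction h with
  | refl => exact subset_rfl
  | tail _ e ih => exact (G.mono _ _ e).trans ih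

private lemma nSuOfRtg (G : NGraph S V) {u : V} {a b : S}
    (h : ReflTransGen (Edge G) a b) :
    u ∈ G.C b → ReflTransGen (StepUnder G u) a b := by
  induction h with
  | refl => exact fun _ => .refl
  | tail hab e ih =>
      intro hu
      exact (ih (G.mono _ _ e hu)).tail ⟨e, G.mono _ _ e hu, hu⟩

/-- The state `s` may legally sit on top of the outer stack `σ`. -/
def NTopOk (G : NGraph S V) : List S → S → Prop
  | [], s => s = G.init
  | t :: _, s => s ∈ G.succ t

/-- The outer stack is a chain of successors starting at the initial state. -/
inductive NSChain (G : NGraph S V) : List S → Prop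
  | nil : NSChain G []
  | cons {σ s} : NSChain G σ → NTopOk G σ s → NSChain G (s :: σ)

private lemma nSChainReach (G : NGraph S V) :
    ∀ {σ : List S} {s : S}, NSChain G (s :: σ) → ∀ w ∈ s :: σ,
      ReflTransGen (Edge G) G.init w ∧ ReflTransGen (Edge G) w s := by
  intro σ
  induction σ with
  | nil =>
      intro s h w hw
      cases h with
      | cons _ ht =>
        have hs : s = G.init := ht
        subst hs
        simp only [List.mem_singleton] at hw
        subst hw
        exact ⟨.refl, .refl⟩
  | cons t σ' ih =>
      intro s h w hw
      cases h with
      | cons hσ ht =>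
        have hedge : Edge G t s := ht
        rcases List.mem_cons.1 hw with rfl | hw'
        · rcases ih hσ t (List.mem_cons_self) with ⟨h1, _⟩
          exact ⟨h1.tail hedge, .refl⟩
        · rcases ih hσ w hw' with ⟨h1, h2⟩
          exact ⟨h1, h2.tail hedge⟩

/-- The states with an active inner frame. -/
def NActI : List (NFrame S) → Set S
  | [] => ∅
  | NFrame.callOuter _ :: ks => NActI ks
  | NFrame.outer _ _ :: ks => NActI ks
  | NFrame.outerPop _ :: ks => NActI ks
  | NFrame.callInner x :: ks => insert x (NActI ks)
  | NFrame.inner x _ :: ks => insert x (NActI ks)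

private lemma nActIEmpty {ks : List (NFrame S)}
    (h : ∀ fr ∈ ks, ∃ s rest, fr = NFrame.outer s rest) : NActI ks = ∅ := by
  induction ks with
  | nil => rfl
  | cons fr ks ih =>
      obtain ⟨s, rest, rfl⟩ := h fr (by simp)
      exact ih (fun fr hfr => h fr (by simp [hfr]))

/-- Well-formed pure-outer control stacks. -/
inductive NOutCtl (G : NGraph S V) (F : Set V) (O : Set S) :
    Set S → List (NFrame S) → List S → Prop
  | nil {X} : NOutCtl G F O X [] []
  | frame {X k σ s rest pre} :
      NOutCtl G F O ∅ k σ → NTopOk G σ s → s ∈ O → s ∉ σ →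
      G.succ s = pre ++ rest →
      (∀ s' ∈ pre, s' ∈ O ∪ X ∨ G.C s' ⊆ F) →
      NOutCtl G F O X (.outer s rest :: k) (s :: σ)

private lemma nOutCtlMono {G : NGraph S V} {F F' : Set V} {O O' X : Set S} {ks σ}
    (h : NOutCtl G F O X ks σ) (hF : F ⊆ F') (hO : O ⊆ O') :
    ∀ {X' : Set S}, X ⊆ O' ∪ X' → NOutCtl G F' O' X' ks σ := by
  induction h with
  | nil => exact fun _ => .nil
  | frame h1 ht hsO hsσ hsucc hpre ih =>
      intro X' hX
      refine .frame (ih (Set.empty_subset _)) ht (hO hsO) hsσ hsucc ?_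
      intro s' hs'
      rcases hpre s' hs' with hm | hc
      · rcases (Set.mem_union _ _ _).mp hm with h' | h'
        · exact Or.inl (Set.mem_union_left _ (hO h'))
        · exact Or.inl (hX h')
      · exact Or.inr (hc.trans hF)

private lemma nOutCtlFrames {G : NGraph S V} {F O X ks σ}
    (h : NOutCtl G F O X ks σ) : ∀ fr ∈ ks, ∃ s rest, fr = NFrame.outer s rest := by
  induction h with
  | nil => intro fr hfr; simp at hfr
  | frame _ _ _ _ _ _ ih =>
      intro fr hfr
      rcases List.mem_cons.1 hfr with rfl | hfr'
      · exact ⟨_, _, rfl⟩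
      · exact ih fr hfr'

private lemma nOutCtlMemO {G : NGraph S V} {F O X ks σ}
    (h : NOutCtl G F O X ks σ) : ∀ w ∈ σ, w ∈ O := by
  induction h with
  | nil => intro w hw; simp at hw
  | frame _ _ hsO _ _ _ ih =>
      intro w hw
      rcases List.mem_cons.1 hw with rfl | hw'
      · exact hsO
      · exact ih w hw'

private lemma nOutCtlSChain {G : NGraph S V} {F O X ks σ}
    (h : NOutCtl G F O X ks σ) : NSChain G σ := by
  induction h with
  | nil => exact .nil
  | frame _ ht _ _ _ _ ih => exact .cons ih ht

private lemma nOutCtlNoPop {G : NGraph S V} {F O X ks σ}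
    (h : NOutCtl G F O X ks σ) {x : S} : NFrame.outerPop x ∉ ks := by
  intro hmem
  obtain ⟨s, rest, h'⟩ := nOutCtlFrames h _ hmem
  simp at h'

private lemma nOutCtlActI {G : NGraph S V} {F O X ks σ}
    (h : NOutCtl G F O X ks σ) : NActI ks = ∅ := nActIEmpty (nOutCtlFrames h)

/-- Well-formed inner control stacks above a seed `q`. -/
inductive NInnCtl (G : NGraph S V) (F : Set V) (I St : Set S) (q : S) :
    Set S → List (NFrame S) → S → Prop
  | base {X rest pre} : q ∈ I →
      G.succ q = pre ++ rest →
      (∀ s' ∈ pre, s' ∉ St ∧ (s' ∈ I ∪ X ∨ G.C s' ⊆ F)) →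
      NInnCtl G F I St q X [.inner q rest] q
  | step {X k t s rest pre} :
      NInnCtl G F I St q ∅ k t → s ∈ G.succ t → s ∈ I → s ∉ St →
      (G.acc s → G.C s ⊆ F) → s ∉ NActI k →
      G.succ s = pre ++ rest →
      (∀ s' ∈ pre, s' ∉ St ∧ (s' ∈ I ∪ X ∨ G.C s' ⊆ F)) →
      NInnCtl G F I St q X (.inner s rest :: k) s

private lemma nInnCtlMono {G : NGraph S V} {F F' : Set V} {I I' St X : Set S} {q inn t}
    (h : NInnCtl G F I St q X inn t) (hF : F ⊆ F') (hI : I ⊆ I') :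
    ∀ {X' : Set S}, X ⊆ I' ∪ X' → NInnCtl G F' I' St q X' inn t := by
  induction h with
  | base hq hsucc hpre =>
      intro X' hX
      refine .base (hI hq) hsucc ?_
      intro s' hs'
      obtain ⟨h1, h2⟩ := hpre s' hs'
      refine ⟨h1, ?_⟩
      rcases h2 with hm | hc
      · rcases (Set.mem_union _ _ _).mp hm with h' | h'
        · exact Or.inl (Set.mem_union_left _ (hI h'))
        · exact Or.inl (hX h')
      · exact Or.inr (hc.trans hF)
  | step h1 hst hsI hsSt haccF hact hsucc hpre ih =>
      intro X' hX
      refine .step (ih (Set.empty_subset _)) hst (hI hsI) hsSt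
        (fun ha => (haccF ha).trans hF) hact hsucc ?_
      intro s' hs'
      obtain ⟨h1', h2⟩ := hpre s' hs'
      refine ⟨h1', ?_⟩
      rcases h2 with hm | hc
      · rcases (Set.mem_union _ _ _).mp hm with h' | h'
        · exact Or.inl (Set.mem_union_left _ (hI h'))
        · exact Or.inl (hX h')
      · exact Or.inr (hc.trans hF)

private lemma nInnCtlFrames {G : NGraph S V} {F I St X q inn t}
    (h : NInnCtl G F I St q X inn t) : ∀ fr ∈ inn, ∃ x rest, fr = NFrame.inner x rest := by
  induction h with
  | base _ _ _ => intro fr hfr; simp only [List.mem_singleton] at hfr; exact ⟨_, _, hfr⟩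
  | step _ _ _ _ _ _ _ _ ih =>
      intro fr hfr
      rcases List.mem_cons.1 hfr with rfl | hfr'
      · exact ⟨_, _, rfl⟩
      · exact ih fr hfr'

private lemma nInnCtlActI {G : NGraph S V} {F I St X q inn t}
    (h : NInnCtl G F I St q X inn t) : NActI inn ⊆ I := by
  induction h with
  | base hq _ _ =>
      intro x hx
      rcases Set.mem_insert_iff.mp hx with rfl | hx'
      · exact hq
      · simp [NActI] at hx'
  | step _ _ hsI _ _ _ _ _ ih =>
      intro x hx
      rcases Set.mem_insert_iff.mp hx with rfl | hx'
      · exact hsI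
      · exact ih hx'

private lemma nInnCtlReach {G : NGraph S V} {F I St X q inn t}
    (h : NInnCtl G F I St q X inn t) : ReflTransGen (Edge G) q t := by
  induction h with
  | base _ _ _ => exact .refl
  | step _ hst _ _ _ _ _ _ ih => exact ih.tail hst

private lemma nInnCtlHead {G : NGraph S V} {F I St X q inn t}
    (h : NInnCtl G F I St q X inn t) : ∃ rest inn', inn = NFrame.inner t rest :: inn' := by
  cases h with
  | base _ _ _ => exact ⟨_, [], rfl⟩
  | step _ _ _ _ _ _ _ _ => exact ⟨_, _, rfl⟩

private lemma nInnCtlNoPop {G : NGraph S V} {F I St X q inn t}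
    (h : NInnCtl G F I St q X inn t) {x : S} : NFrame.outerPop x ∉ inn := by
  intro hmem
  obtain ⟨s, rest, h'⟩ := nInnCtlFrames h _ hmem
  simp at h'

private lemma nInnCtlTopSucc {G : NGraph S V} {F : Set V} {I St X : Set S} {q t : S}
    {rst : List S} {inn : List (NFrame S)}
    (h : NInnCtl G F I St q X (NFrame.inner t rst :: inn) t) : ∀ x ∈ rst, x ∈ G.succ t := by
  cases h with
  | base _ hsucc _ =>
      intro x hx; rw [hsucc]; exact List.mem_append_right _ hx
  | step _ _ _ _ _ _ hsucc _ =>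
      intro x hx; rw [hsucc]; exact List.mem_append_right _ hx

private lemma nInnCtlTopMem {G : NGraph S V} {F : Set V} {I St X : Set S} {q t : S}
    {inn : List (NFrame S)} (h : NInnCtl G F I St q X inn t) : t ∈ I := by
  cases h with
  | base hq _ _ => exact hq
  | step _ _ hs _ _ _ _ _ => exact hs

/-- Data attached to an accepting seed. -/
abbrev NSeedBase (G : NGraph S V) (F : Set V) (O : Set S)
    (k : List (NFrame S)) (σ' : List S) (q : S) : Prop :=
  NOutCtl G F O ∅ k σ' ∧ NTopOk G σ' q ∧ q ∉ σ' ∧ q ∈ O ∧ G.acc q ∧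
    ∀ s' ∈ G.succ q, s' ∈ O ∨ G.C s' ⊆ F

private lemma nSeedMono {G : NGraph S V} {F F' : Set V} {O O' : Set S} {k σ' q}
    (hs : NSeedBase G F O k σ' q) (hF : F ⊆ F') (hO : O ⊆ O') :
    NSeedBase G F' O' k σ' q := by
  obtain ⟨h1, h2, h3, h4, h5, h6⟩ := hs
  exact ⟨nOutCtlMono h1 hF hO (Set.empty_subset _), h2, h3, hO h4, h5,
    fun x hx => (h6 x hx).imp (fun h => hO h) (fun h => h.trans hF)⟩

/-- Shape of a well-formed control stack. -/
abbrev NCtrlOK (G : NGraph S V) (F : Set V) (O I St : Set S)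
    (ks : List (NFrame S)) (σ : List S) : Prop :=
  NOutCtl G F O ∅ ks σ ∨
  (∃ s k, ks = NFrame.callOuter s :: k ∧ NOutCtl G F O {s} k σ ∧ NTopOk G σ s ∧
      s ∉ O ∧ (G.C s ⊆ F → I = ∅)) ∨
  (∃ q σ' k, σ = q :: σ' ∧ NSeedBase G F O k σ' q ∧
    (ks = NFrame.callInner q :: NFrame.outerPop q :: k ∨
     (∃ inn t, ks = inn ++ NFrame.outerPop q :: k ∧ NInnCtl G F I St q ∅ inn t) ∨
     (∃ s inn t, ks = NFrame.callInner s :: (inn ++ NFrame.outerPop q :: k) ∧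
        NInnCtl G F I St q {s} inn t ∧ s ∈ G.succ t ∧ s ∉ I ∧ s ∉ St ∧
        ¬ G.C s ⊆ F ∧ s ∈ O ∧ ¬ G.acc s) ∨
     (ks = NFrame.outerPop q :: k ∧ q ∈ I)))

/-- The global invariant of the Cumulative NDFS machine. -/
abbrev NInvAux (G : NGraph S V) (F : Set V) (O I St : Set S)
    (ks : List (NFrame S)) : Prop :=
  (∃ σ, St = {x | x ∈ σ} ∧ NCtrlOK G F O I St ks σ) ∧
  (I ⊆ O ∪ {x | G.C x ⊆ F}) ∧
  (∀ x ∈ O, x ∉ St → ∀ s' ∈ G.succ x, s' ∈ O ∨ G.C s' ⊆ F) ∧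
  (∀ x ∈ I, x ∉ NActI ks →
      G.C x ⊆ F ∨ ∀ s' ∈ G.succ x, s' ∉ St ∧ (s' ∈ I ∨ G.C s' ⊆ F)) ∧
  (∀ x ∈ I, x ∈ St → NFrame.outerPop x ∈ ks) ∧
  (∀ u, u ∉ F → ∀ x, G.acc x → u ∈ G.C x → x ∈ I → x ∉ NActI ks → x ∉ St →
      ¬ TransGen (StepUnder G u) x x) ∧
  (∀ u ∈ F, ∃ q, G.acc q ∧ ReflTransGen (Edge G) G.init q ∧
      TransGen (StepUnder G u) q q) ∧
  (G.init ∈ O ∨ ks = [NFrame.callOuter G.init]) ∧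
  (∀ x ∈ O, G.acc x → x ∈ St ∨ x ∈ I ∨ G.C x ⊆ F)

abbrev NInv (G : NGraph S V) (c : NConfig S V) : Prop :=
  NInvAux G c.found c.outer c.inner c.stack c.ctrl

private lemma nNoRedCycle {G : NGraph S V} {F : Set V} {I St : Set S} {u : V} {s : S}
    (hK3 : ∀ x ∈ I, G.C x ⊆ F ∨ ∀ s' ∈ G.succ x, s' ∉ St ∧ (s' ∈ I ∨ G.C s' ⊆ F))
    (hu : u ∉ F) (hsI : s ∈ I) (hsSt : s ∈ St) :
    ¬ TransGen (StepUnder G u) s s := by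
  intro hcyc
  obtain ⟨z, hz1, hz2⟩ := TransGen.tail'_iff.mp hcyc
  have hmem : ∀ y, ReflTransGen (StepUnder G u) s y → y ∈ I := by
    intro y hy
    induction hy with
    | refl => exact hsI
    | tail h1 h2 ih =>
        rcases hK3 _ ih with hc | hall
        · exact absurd (hc h2.2.1) hu
        · rcases hall _ h2.1 with ⟨_, hI | hc⟩
          · exact hI
          · exact absurd (hc h2.2.2) hu
  have hzI := hmem z hz1
  rcases hK3 _ hzI with hc | hall
  · exact hu (hc hz2.2.1)
  · exact (hall _ hz2.1).1 hsSt

private lemma nInvInit (G : NGraph S V) : NInv G (initConfig G) := by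
  show NInvAux G ∅ ∅ ∅ ∅ [NFrame.callOuter G.init]
  refine ⟨⟨[], by ext x; simp, Or.inr (Or.inl ⟨G.init, [], rfl, .nil, rfl, by simp,
      fun _ => rfl⟩)⟩, by simp, by simp, by simp, by simp, ?_, by simp, Or.inr rfl, by simp⟩
  intro u _ x _ _ hxI
  simp at hxI

private lemma nInvStep {G : NGraph S V} {c c' : NConfig S V}
    (hstep : NStep G c c') (hinv : NInv G c) : NInv G c' := by
  cases hstep with
  | callOuter F O I St s k =>
    have hinv' : NInvAux G F O I St (NFrame.callOuter s :: k) := hinv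
    clear hinv
    show NInvAux G F (insert s O) I (insert s St) (NFrame.outer s (G.succ s) :: k)
    obtain ⟨⟨σ0, hSt0, hctrl⟩, hK1, hK2, hK3, hK4, hK5, hK6, hK7, hK8⟩ := hinv'
    replace hSt0 : St = {x | x ∈ σ0} := hSt0
    subst hSt0
    rcases hctrl with hM1 | ⟨s₂, k₂, heq, hout, htop, hsO, hcovI⟩ | ⟨q, σ', k₂, hσ, hseed, hM3⟩
    · cases hM1
    · simp only [List.cons.injEq, NFrame.callOuter.injEq] at heq
      obtain ⟨rfl, rfl⟩ := heq
      have hsσ : s ∉ σ0 := fun h => hsO (nOutCtlMemO hout _ h)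
      have hsI : s ∉ I := by
        intro hI
        rcases (Set.mem_union _ _ _).mp (hK1 hI) with h | h
        · exact hsO h
        · rw [hcovI h] at hI; exact hI
      have hXsub : ({s} : Set S) ⊆ insert s O ∪ ∅ := by
        intro x hx
        rw [Set.mem_singleton_iff] at hx
        subst hx
        exact Set.mem_union_left _ (Set.mem_insert _ _)
      refine ⟨⟨s :: σ0, by ext x; simp, Or.inl ?_⟩, ?_, ?_, ?_, ?_, ?_, ?_, ?_, ?_⟩
      · exact NOutCtl.frame (pre := []) (nOutCtlMono hout subset_rfl (Set.subset_insert _ _)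
          hXsub) htop (Set.mem_insert _ _) hsσ rfl (by simp)
      · exact hK1.trans (Set.union_subset_union_left _ (Set.subset_insert _ _))
      · intro x hx hxSt s' hs'
        rcases Set.mem_insert_iff.mp hx with rfl | hxO
        · exact absurd (Set.mem_insert _ _) hxSt
        · exact (hK2 x hxO (fun h => hxSt (Set.mem_insert_of_mem _ h)) s' hs').imp
            (Set.mem_insert_of_mem _) id
      · intro x hxI hxA
        rcases hK3 x hxI hxA with hc | hall
        · exact Or.inl hc
        · refine Or.inr fun s' hs' => ?_
          obtain ⟨h1, h2⟩ := hall s' hs'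
          refine ⟨?_, h2⟩
          intro hmem
          rcases Set.mem_insert_iff.mp hmem with rfl | h'
          · rcases h2 with h2 | h2
            · rcases (Set.mem_union _ _ _).mp (hK1 h2) with h3 | h3
              · exact hsO h3
              · rw [hcovI h3] at h2; exact h2
            · rw [hcovI h2] at hxI; exact hxI
          · exact h1 h'
      · intro x hxI hxSt
        rcases Set.mem_insert_iff.mp hxSt with rfl | hxSt'
        · exact absurd hxI hsI
        · have hmem := hK4 x hxI hxSt'
          rcases List.mem_cons.1 hmem with h | h
          · exact absurd h (by simp)
          · exact List.mem_cons_of_mem _ h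
      · intro u hu x hacc hux hxI hxA hxSt
        exact hK5 u hu x hacc hux hxI hxA (fun h => hxSt (Set.mem_insert_of_mem _ h)) 
      · exact hK6
      · rcases hK7 with h | h
        · exact Or.inl (Set.mem_insert_of_mem _ h)
        · simp only [List.cons.injEq, NFrame.callOuter.injEq] at h
          obtain ⟨rfl, rfl⟩ := h
          exact Or.inl (Set.mem_insert _ _)
      · intro x hx hacc
        rcases Set.mem_insert_iff.mp hx with rfl | hxO
        · exact Or.inl (Set.mem_insert _ _)
        · rcases hK8 x hxO hacc with h | h
          · exact Or.inl (Set.mem_insert_of_mem _ h)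
          · exact Or.inr h
    · rcases hM3 with h3 | ⟨inn, t, h3, hinn⟩ | ⟨s₃, inn, t, h3, _⟩ | ⟨h3, _⟩
      · simp at h3
      · obtain ⟨r0, inn', rfl⟩ := nInnCtlHead hinn
        simp at h3
      · simp at h3
      · simp at h3
  | outerSkip F O I St s s' rest k h =>
    have hinv' : NInvAux G F O I St (NFrame.outer s (s' :: rest) :: k) := hinv
    clear hinv
    show NInvAux G F O I St (NFrame.outer s rest :: k)
    obtain ⟨⟨σ0, hSt0, hctrl⟩, hK1, hK2, hK3, hK4, hK5, hK6, hK7, hK8⟩ := hinv'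
    subst hSt0
    rcases hctrl with hM1 | ⟨s₂, k₂, heq, _⟩ | ⟨q, σ', k₂, hσ, hseed, hM3⟩
    · cases hM1 with
      | frame h0 htop hsO hsσ hsucc hpre =>
        rename_i σ1 pre
        have hs'O : s' ∈ O ∨ G.C s' ⊆ F := by
          rcases h with h | h | h
          · exact Or.inl h
          · have h' : s' ∈ s :: σ1 := h
            rcases List.mem_cons.1 h' with rfl | h''
            · exact Or.inl hsO
            · exact Or.inl (nOutCtlMemO h0 _ h'')
          · exact Or.inr h
        refine ⟨⟨s :: σ1, rfl, Or.inl ?_⟩, hK1, hK2, ?_, ?_, ?_, hK6, ?_, hK8⟩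
        · refine NOutCtl.frame (pre := pre ++ [s']) h0 htop hsO hsσ ?_ ?_
          · rw [List.append_assoc]; exact hsucc
          · intro x hx
            rcases List.mem_append.1 hx with hx | hx
            · exact hpre x hx
            · have hxs : x = s' := by simpa using hx
              subst hxs
              exact hs'O.imp (fun h' => Set.mem_union_left _ h') id
        · intro x hxI hxA
          exact hK3 x hxI hxA
        · intro x hxI hxSt
          have hm := hK4 x hxI hxSt
          rcases List.mem_cons.1 hm with hm | hm
          · exact absurd hm (by simp)
          · exact List.mem_cons_of_mem _ hm
        · intro u hu x ha hux hxI hxA hxSt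
          exact hK5 u hu x ha hux hxI hxA hxSt
        · exact Or.inl (hK7.resolve_right (by simp))
    · simp at heq
    · rcases hM3 with h3 | ⟨inn, t, h3, hinn⟩ | ⟨s₃, inn, t, h3, _⟩ | ⟨h3, _⟩
      · simp at h3
      · obtain ⟨r0, inn', rfl⟩ := nInnCtlHead hinn
        simp at h3
      · simp at h3
      · simp at h3
  | outerRec F O I St s s' rest k h1 h2 h3 =>
    have hinv' : NInvAux G F O I St (NFrame.outer s (s' :: rest) :: k) := hinv
    clear hinv
    show NInvAux G F O I St (NFrame.callOuter s' :: NFrame.outer s rest :: k)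
    obtain ⟨⟨σ0, hSt0, hctrl⟩, hK1, hK2, hK3, hK4, hK5, hK6, hK7, hK8⟩ := hinv'
    subst hSt0
    rcases hctrl with hM1 | ⟨s₂, k₂, heq, _⟩ | ⟨q, σ', k₂, hσ, hseed, hM3⟩
    · cases hM1 with
      | frame h0 htop hsO hsσ hsucc hpre =>
        rename_i σ1 pre
        have hedge : s' ∈ G.succ s := by rw [hsucc]; simp
        refine ⟨⟨s :: σ1, rfl, Or.inr (Or.inl ⟨s', NFrame.outer s rest :: k, rfl, ?_,
            hedge, h1, fun hc => absurd hc h3⟩)⟩, hK1, hK2, ?_, ?_, ?_, hK6, ?_, hK8⟩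
        · refine NOutCtl.frame (pre := pre ++ [s']) h0 htop hsO hsσ ?_ ?_
          · rw [List.append_assoc]; exact hsucc
          · intro x hx
            rcases List.mem_append.1 hx with hx | hx
            · rcases hpre x hx with hm | hc
              · rcases (Set.mem_union _ _ _).mp hm with h' | h'
                · exact Or.inl (Set.mem_union_left _ h')
                · exact absurd h' (Set.notMem_empty x)
              · exact Or.inr hc
            · have hxs : x = s' := by simpa using hx
              subst hxs
              exact Or.inl (Set.mem_union_right _ rfl)
        · intro x hxI hxA
          exact hK3 x hxI hxA
        · intro x hxI hxSt
          have hm := hK4 x hxI hxSt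
          rcases List.mem_cons.1 hm with hm | hm
          · exact absurd hm (by simp)
          · exact List.mem_cons_of_mem _ (List.mem_cons_of_mem _ hm)
        · intro u hu x ha hux hxI hxA hxSt
          exact hK5 u hu x ha hux hxI hxA hxSt
        · exact Or.inl (hK7.resolve_right (by simp))
    · simp at heq
    · rcases hM3 with h3' | ⟨inn, t, h3', hinn⟩ | ⟨s₃, inn, t, h3', _⟩ | ⟨h3', _⟩
      · simp at h3'
      · obtain ⟨r0, inn', rfl⟩ := nInnCtlHead hinn
        simp at h3'
      · simp at h3'
      · simp at h3'
  | outerAcc F O I St s k hacc hncov =>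
    have hinv' : NInvAux G F O I St (NFrame.outer s [] :: k) := hinv
    clear hinv
    show NInvAux G F O I St (NFrame.callInner s :: NFrame.outerPop s :: k)
    obtain ⟨⟨σ0, hSt0, hctrl⟩, hK1, hK2, hK3, hK4, hK5, hK6, hK7, hK8⟩ := hinv'
    subst hSt0
    rcases hctrl with hM1 | ⟨s₂, k₂, heq, _⟩ | ⟨q, σ', k₂, hσ, hseed, hM3⟩
    · cases hM1 with
      | frame h0 htop hsO hsσ hsucc hpre =>
        rename_i σ1 pre
        rw [List.append_nil] at hsucc
        subst hsucc
        have hclosed : ∀ x ∈ G.succ s, x ∈ O ∨ G.C x ⊆ F := by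
          intro x hx
          rcases hpre x hx with hm | hc
          · rcases (Set.mem_union _ _ _).mp hm with h' | h'
            · exact Or.inl h'
            · exact absurd h' (Set.notMem_empty x)
          · exact Or.inr hc
        have hkAct : NActI k = ∅ := nOutCtlActI h0
        refine ⟨⟨s :: σ1, rfl, Or.inr (Or.inr ⟨s, σ1, k, rfl,
            ⟨h0, htop, hsσ, hsO, hacc, hclosed⟩, Or.inl rfl⟩)⟩, hK1, hK2, ?_, ?_, ?_, hK6, ?_, hK8⟩
        · intro x hxI _
          refine hK3 x hxI ?_
          intro hc
          have hc' : x ∈ NActI k := hc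
          rw [hkAct] at hc'
          exact hc'
        · intro x hxI hxSt
          have hm := hK4 x hxI hxSt
          rcases List.mem_cons.1 hm with hm | hm
          · exact absurd hm (by simp)
          · exact List.mem_cons_of_mem _ (List.mem_cons_of_mem _ hm)
        · intro u hu x ha hux hxI hxA hxSt
          refine hK5 u hu x ha hux hxI ?_ hxSt
          intro hc
          have hc' : x ∈ NActI k := hc
          rw [hkAct] at hc'
          exact hc'
        · exact Or.inl (hK7.resolve_right (by simp))
    · simp at heq
    · rcases hM3 with h3' | ⟨inn, t, h3', hinn⟩ | ⟨s₃, inn, t, h3', _⟩ | ⟨h3', _⟩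
      · simp at h3'
      · obtain ⟨r0, inn', rfl⟩ := nInnCtlHead hinn
        simp at h3'
      · simp at h3'
      · simp at h3'
  | outerDone F O I St s k hnd =>
    have hinv' : NInvAux G F O I St (NFrame.outer s [] :: k) := hinv
    clear hinv
    show NInvAux G F O I (St \ {s}) k
    obtain ⟨⟨σ0, hSt0, hctrl⟩, hK1, hK2, hK3, hK4, hK5, hK6, hK7, hK8⟩ := hinv'
    subst hSt0
    rcases hctrl with hM1 | ⟨s₂, k₂, heq, _⟩ | ⟨q, σ', k₂, hσ, hseed, hM3⟩
    · cases hM1 with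
      | frame h0 htop hsO hsσ hsucc hpre =>
        rename_i σ1 pre
        rw [List.append_nil] at hsucc
        subst hsucc
        have hclosed : ∀ x ∈ G.succ s, x ∈ O ∨ G.C x ⊆ F := by
          intro x hx
          rcases hpre x hx with hm | hc
          · rcases (Set.mem_union _ _ _).mp hm with h' | h'
            · exact Or.inl h'
            · exact absurd h' (Set.notMem_empty x)
          · exact Or.inr hc
        have hsI : s ∉ I := by
          intro hI
          have hm := hK4 s hI (List.mem_cons_self)
          rcases List.mem_cons.1 hm with hm | hm
          · exact absurd hm (by simp)
          · exact nOutCtlNoPop h0 hm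
        have hStEq : ({x | x ∈ s :: σ1} : Set S) \ {s} = {x | x ∈ σ1} := by
          ext x
          simp only [Set.mem_diff, Set.mem_setOf_eq, List.mem_cons, Set.mem_singleton_iff]
          constructor
          · rintro ⟨h1 | h1, hne⟩
            · exact absurd h1 hne
            · exact h1
          · intro h1
            exact ⟨Or.inr h1, fun he => hsσ (he ▸ h1)⟩
        refine ⟨⟨σ1, hStEq, Or.inl h0⟩, hK1, ?_, ?_, ?_, ?_, hK6, ?_, ?_⟩
        · intro x hx hxSt sx hsx
          by_cases hxs : x = s
          · subst hxs
            exact hclosed sx hsx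
          · refine hK2 x hx ?_ sx hsx
            intro hmem
            exact hxSt ⟨hmem, hxs⟩
        · intro x hxI hxA
          rcases hK3 x hxI hxA with hc | hall
          · exact Or.inl hc
          · exact Or.inr fun sx hsx => ⟨fun hm => (hall sx hsx).1 hm.1, (hall sx hsx).2⟩
        · intro x hxI hxSt
          have hm := hK4 x hxI hxSt.1
          rcases List.mem_cons.1 hm with h' | h'
          · exact absurd h' (by simp)
          · exact h'
        · intro u hu x ha hux hxI hxA hxSt
          refine hK5 u hu x ha hux hxI hxA ?_
          intro hmem
          have hmem' : x ∈ s :: σ1 := hmem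
          rcases List.mem_cons.1 hmem' with h' | h'
          · exact hsI (h' ▸ hxI)
          · exact hxSt ⟨hmem, fun he => hsσ (he ▸ h')⟩
        · exact Or.inl (hK7.resolve_right (by simp))
        · intro x hx hacc'
          by_cases hxs : x = s
          · subst hxs
            right; right
            by_contra hc
            exact hnd ⟨hacc', hc⟩
          · rcases hK8 x hx hacc' with h' | h'
            · exact Or.inl ⟨h', hxs⟩
            · exact Or.inr h'
    · simp at heq
    · rcases hM3 with h3' | ⟨inn, t, h3', hinn⟩ | ⟨s₃, inn, t, h3', _⟩ | ⟨h3', _⟩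
      · simp at h3'
      · obtain ⟨r0, inn', rfl⟩ := nInnCtlHead hinn
        simp at h3'
      · simp at h3'
      · simp at h3'
  | outerPop F O I St s k =>
    have hinv' : NInvAux G F O I St (NFrame.outerPop s :: k) := hinv
    clear hinv
    show NInvAux G F O I (St \ {s}) k
    obtain ⟨⟨σ0, hSt0, hctrl⟩, hK1, hK2, hK3, hK4, hK5, hK6, hK7, hK8⟩ := hinv'
    subst hSt0
    rcases hctrl with hM1 | ⟨s₂, k₂, heq, _⟩ | ⟨q, σ', k₂, hσ, hseed, hM3⟩
    · cases hM1
    · simp at heq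
    · rcases hM3 with h3' | ⟨inn, t, h3', hinn⟩ | ⟨s₃, inn, t, h3', _⟩ | ⟨h3', hqI⟩
      · simp at h3'
      · obtain ⟨r0, inn', rfl⟩ := nInnCtlHead hinn
        simp at h3'
      · simp at h3'
      · simp only [List.cons.injEq, NFrame.outerPop.injEq] at h3'
        obtain ⟨rfl, rfl⟩ := h3'
        subst hσ
        obtain ⟨h0, htop, hsσ, hsO, hacc, hclosed⟩ := hseed
        have hkAct : NActI k = ∅ := nOutCtlActI h0
        have hK3' : ∀ x ∈ I, G.C x ⊆ F ∨
            ∀ sx ∈ G.succ x, sx ∉ ({y | y ∈ s :: σ'} : Set S) ∧ (sx ∈ I ∨ G.C sx ⊆ F) := by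
          intro x hxI
          refine hK3 x hxI ?_
          intro hc
          have hc' : x ∈ NActI k := hc
          rw [hkAct] at hc'
          exact hc'
        have hnocyc : ∀ u, u ∉ F → ¬ TransGen (StepUnder G u) s s := by
          intro u hu
          exact nNoRedCycle hK3' hu hqI (List.mem_cons_self)
        have hStEq : ({x | x ∈ s :: σ'} : Set S) \ {s} = {x | x ∈ σ'} := by
          ext x
          simp only [Set.mem_diff, Set.mem_setOf_eq, List.mem_cons, Set.mem_singleton_iff]
          constructor
          · rintro ⟨h1 | h1, hne⟩
            · exact absurd h1 hne
            · exact h1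
          · intro h1
            exact ⟨Or.inr h1, fun he => hsσ (he ▸ h1)⟩
        refine ⟨⟨σ', hStEq, Or.inl h0⟩, hK1, ?_, ?_, ?_, ?_, hK6, ?_, ?_⟩
        · intro x hx hxSt sx hsx
          by_cases hxs : x = s
          · subst hxs
            exact hclosed sx hsx
          · refine hK2 x hx ?_ sx hsx
            intro hmem
            exact hxSt ⟨hmem, hxs⟩
        · intro x hxI hxA
          rcases hK3' x hxI with hc | hall
          · exact Or.inl hc
          · exact Or.inr fun sx hsx => ⟨fun hm => (hall sx hsx).1 hm.1, (hall sx hsx).2⟩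
        · intro x hxI hxSt
          have hm := hK4 x hxI hxSt.1
          rcases List.mem_cons.1 hm with h' | h'
          · have hxs : x = s := by simpa using h'
            exact absurd hxs hxSt.2
          · exact h'
        · intro u hu x ha hux hxI hxA hxSt
          by_cases hxs : x = s
          · subst hxs
            exact hnocyc u hu
          · refine hK5 u hu x ha hux hxI ?_ ?_
            · intro hc
              have hc' : x ∈ NActI k := hc
              rw [hkAct] at hc'
              exact hc'
            · intro hmem
              exact hxSt ⟨hmem, hxs⟩
        · exact Or.inl (hK7.resolve_right (by simp))
        · intro x hx hacc'
          by_cases hxs : x = s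
          · subst hxs
            exact Or.inr (Or.inl hqI)
          · rcases hK8 x hx hacc' with h' | h'
            · exact Or.inl ⟨h', hxs⟩
            · exact Or.inr h'
  | callInner F O I St s k =>
    have hinv' : NInvAux G F O I St (NFrame.callInner s :: k) := hinv
    clear hinv
    show NInvAux G F O (insert s I) St (NFrame.inner s (G.succ s) :: k)
    obtain ⟨⟨σ0, hSt0, hctrl⟩, hK1, hK2, hK3, hK4, hK5, hK6, hK7, hK8⟩ := hinv'
    subst hSt0
    rcases hctrl with hM1 | ⟨s₂, k₂, heq, _⟩ | ⟨q, σ', k₂, hσ, hseed, hM3⟩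
    · cases hM1
    · simp at heq
    · rcases hM3 with h3 | ⟨inn, t, h3, hinn⟩ |
        ⟨s₃, inn, t, h3, hinn, hst, hsI, hsSt, hncov, hsO, hnacc⟩ | ⟨h3, _⟩
      · -- seed call
        simp only [List.cons.injEq, NFrame.callInner.injEq] at h3
        obtain ⟨rfl, rfl⟩ := h3
        subst hσ
        obtain ⟨h0, htop, hsσ, hsO, hacc, hclosed⟩ := hseed
        refine ⟨⟨s :: σ', rfl, Or.inr (Or.inr ⟨s, σ', k₂, rfl,
            ⟨h0, htop, hsσ, hsO, hacc, hclosed⟩,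
            Or.inr (Or.inl ⟨[NFrame.inner s (G.succ s)], s, rfl,
              NInnCtl.base (pre := []) (Set.mem_insert _ _) rfl (by simp)⟩)⟩)⟩,
          ?_, hK2, ?_, ?_, ?_, hK6, ?_, ?_⟩
        · intro x hx
          rcases Set.mem_insert_iff.mp hx with rfl | hx'
          · exact Set.mem_union_left _ hsO
          · exact hK1 hx'
        · intro x hxI hxA
          have hxs : x ≠ s := by
            intro he; subst he
            exact hxA (Set.mem_insert _ _)
          rcases Set.mem_insert_iff.mp hxI with he | hxI'
          · exact absurd he hxs
          · rcases hK3 x hxI' hxA with hc | hall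
            · exact Or.inl hc
            · exact Or.inr fun sx hsx =>
                ⟨(hall sx hsx).1, (hall sx hsx).2.imp (fun h' => Set.mem_insert_of_mem _ h') id⟩
        · intro x hxI hxSt
          rcases Set.mem_insert_iff.mp hxI with rfl | hxI'
          · exact List.mem_cons_of_mem _ (List.mem_cons_self)
          · have hm := hK4 x hxI' hxSt
            rcases List.mem_cons.1 hm with h' | h'
            · exact absurd h' (by simp)
            · exact List.mem_cons_of_mem _ h'
        · intro u hu x ha hux hxI hxA hxSt
          have hxs : x ≠ s := by
            intro he; subst he
            exact hxA (Set.mem_insert _ _)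
          rcases Set.mem_insert_iff.mp hxI with he | hxI'
          · exact absurd he hxs
          · exact hK5 u hu x ha hux hxI' hxA hxSt
        · exact Or.inl (hK7.resolve_right (by simp))
        · intro x hx hacc'
          exact (hK8 x hx hacc').imp id
            (fun h' => h'.imp (fun h'' => Set.mem_insert_of_mem _ h'') id)
      · obtain ⟨r0, inn', rfl⟩ := nInnCtlHead hinn
        simp at h3
      · -- inner recursion call
        simp only [List.cons.injEq, NFrame.callInner.injEq] at h3
        obtain ⟨rfl, rfl⟩ := h3
        subst hσ
        obtain ⟨h0, htop, hqσ, hqO, hqacc, hqclosed⟩ := hseed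
        have hinn' : NInnCtl G F (insert s I) {y | y ∈ q :: σ'} q ∅ inn t :=
          nInnCtlMono hinn subset_rfl (Set.subset_insert _ _) (by
            intro x hx
            rw [Set.mem_singleton_iff] at hx
            subst hx
            exact Set.mem_union_left _ (Set.mem_insert _ _))
        have hstep2 : NInnCtl G F (insert s I) {y | y ∈ q :: σ'} q ∅
            (NFrame.inner s (G.succ s) :: inn) s :=
          NInnCtl.step (pre := []) hinn' hst (Set.mem_insert _ _) hsSt
            (fun ha => absurd ha hnacc) (fun hc => hsI (nInnCtlActI hinn hc)) rfl (by simp)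
        refine ⟨⟨q :: σ', rfl, Or.inr (Or.inr ⟨q, σ', k₂, rfl,
            ⟨h0, htop, hqσ, hqO, hqacc, hqclosed⟩,
            Or.inr (Or.inl ⟨NFrame.inner s (G.succ s) :: inn, s, rfl, hstep2⟩)⟩)⟩,
          ?_, hK2, ?_, ?_, ?_, hK6, ?_, ?_⟩
        · intro x hx
          rcases Set.mem_insert_iff.mp hx with rfl | hx'
          · exact Set.mem_union_left _ hsO
          · exact hK1 hx'
        · intro x hxI hxA
          have hxs : x ≠ s := by
            intro he; subst he
            exact hxA (Set.mem_insert _ _)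
          rcases Set.mem_insert_iff.mp hxI with he | hxI'
          · exact absurd he hxs
          · rcases hK3 x hxI' hxA with hc | hall
            · exact Or.inl hc
            · exact Or.inr fun sx hsx =>
                ⟨(hall sx hsx).1, (hall sx hsx).2.imp (fun h' => Set.mem_insert_of_mem _ h') id⟩
        · intro x hxI hxSt
          rcases Set.mem_insert_iff.mp hxI with rfl | hxI'
          · exact absurd hxSt hsSt
          · have hm := hK4 x hxI' hxSt
            rcases List.mem_cons.1 hm with h' | h'
            · exact absurd h' (by simp)
            · exact List.mem_cons_of_mem _ h'
        · intro u hu x ha hux hxI hxA hxSt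
          have hxs : x ≠ s := by
            intro he; subst he
            exact hxA (Set.mem_insert _ _)
          rcases Set.mem_insert_iff.mp hxI with he | hxI'
          · exact absurd he hxs
          · exact hK5 u hu x ha hux hxI' hxA hxSt
        · exact Or.inl (hK7.resolve_right (by simp))
        · intro x hx hacc'
          exact (hK8 x hx hacc').imp id
            (fun h' => h'.imp (fun h'' => Set.mem_insert_of_mem _ h'') id)
      · simp at h3
  | innerFound F O I St s s' rest k hs'St =>
    have hinv' : NInvAux G F O I St (NFrame.inner s (s' :: rest) :: k) := hinv
    clear hinv
    show NInvAux G (F ∪ G.C s') O I St k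
    obtain ⟨⟨σ0, hSt0, hctrl⟩, hK1, hK2, hK3, hK4, hK5, hK6, hK7, hK8⟩ := hinv'
    subst hSt0
    rcases hctrl with hM1 | ⟨s₂, k₂, heq, _⟩ | ⟨q, σ', k₂, hσ, hseed, hM3⟩
    · cases hM1
    · simp at heq
    · rcases hM3 with h3 | ⟨inn, t, h3, hinn⟩ | ⟨s₃, inn, t, h3, _⟩ | ⟨h3, _⟩
      · simp at h3
      · obtain ⟨r0, inn'', rfl⟩ := nInnCtlHead hinn
        rw [List.cons_append] at h3
        simp only [List.cons.injEq, NFrame.inner.injEq] at h3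
        obtain ⟨⟨rfl, rfl⟩, rfl⟩ := h3
        subst hσ
        obtain ⟨h0, htop, hqσ, hqO, hqacc, hqclosed⟩ := hseed
        have hchain : NSChain G (q :: σ') := .cons (nOutCtlSChain h0) htop
        have hs'mem : s' ∈ q :: σ' := hs'St
        have hs'q : ReflTransGen (Edge G) s' q := (nSChainReach G hchain s' hs'mem).2
        have hinitq : ReflTransGen (Edge G) G.init q :=
          (nSChainReach G hchain q (List.mem_cons_self)).1
        have hqs : ReflTransGen (Edge G) q s := nInnCtlReach hinn
        have hedge : s' ∈ G.succ s := nInnCtlTopSucc hinn s' (List.mem_cons_self)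
        have hsI : s ∈ I := nInnCtlTopMem hinn
        have hs's : ReflTransGen (Edge G) s' s := hs'q.trans hqs
        have hcovs : G.C s ⊆ F ∪ G.C s' :=
          (nMonoRtg G hs's).trans Set.subset_union_right
        have hqs' : ReflTransGen (Edge G) q s' := hqs.tail hedge
        have huqsub : G.C s' ⊆ G.C q := nMonoRtg G hqs'
        have hActOld : ∀ x : S, x ∉ NActI (inn'' ++ NFrame.outerPop q :: k₂) → x ≠ s →
            x ∉ NActI (NFrame.inner s (s' :: rest) :: (inn'' ++ NFrame.outerPop q :: k₂)) := by
          intro x hA hxs hc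
          rcases Set.mem_insert_iff.mp hc with he | hc'
          · exact hxs he
          · exact hA hc'
        have hseed' : NSeedBase G (F ∪ G.C s') O k₂ σ' q :=
          nSeedMono ⟨h0, htop, hqσ, hqO, hqacc, hqclosed⟩ Set.subset_union_left subset_rfl
        have hctrl' : NCtrlOK G (F ∪ G.C s') O I {y | y ∈ q :: σ'}
            (inn'' ++ NFrame.outerPop q :: k₂) (q :: σ') := by
          cases hinn with
          | base _ _ _ =>
            exact Or.inr (Or.inr ⟨s, σ', k₂, rfl, hseed',
              Or.inr (Or.inr (Or.inr ⟨rfl, hsI⟩))⟩)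
          | step htail _ _ _ _ _ _ _ =>
            exact Or.inr (Or.inr ⟨q, σ', k₂, rfl, hseed', Or.inr (Or.inl ⟨inn'', _, rfl,
              nInnCtlMono htail Set.subset_union_left subset_rfl (Set.empty_subset _)⟩)⟩)
        refine ⟨⟨q :: σ', rfl, hctrl'⟩, ?_, ?_, ?_, ?_, ?_, ?_,
          Or.inl (hK7.resolve_right (by simp)), ?_⟩
        · exact hK1.trans (Set.union_subset_union_right _
            (fun x hx => hx.trans Set.subset_union_left))
        · intro x hx hxSt sx hsx
          exact (hK2 x hx hxSt sx hsx).imp id (fun h' => h'.trans Set.subset_union_left)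
        · intro x hxI hxA
          by_cases hxs : x = s
          · subst hxs
            exact Or.inl hcovs
          · rcases hK3 x hxI (hActOld x hxA hxs) with hc | hall
            · exact Or.inl (hc.trans Set.subset_union_left)
            · exact Or.inr fun sx hsx => ⟨(hall sx hsx).1,
                (hall sx hsx).2.imp id (fun h' => h'.trans Set.subset_union_left)⟩
        · intro x hxI hxSt
          have hm := hK4 x hxI hxSt
          rcases List.mem_cons.1 hm with h' | h'
          · exact absurd h' (by simp)
          · exact h'
        · intro u hu x ha hux hxI hxA hxSt
          have huF : u ∉ F := fun h' => hu (Set.mem_union_left _ h')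
          by_cases hxs : x = s
          · subst hxs
            exact absurd (hcovs hux) hu
          · exact hK5 u huF x ha hux hxI (hActOld x hxA hxs) hxSt
        · intro u hu
          rcases (Set.mem_union _ _ _).mp hu with hu' | hu'
          · exact hK6 u hu'
          · have huq : u ∈ G.C q := huqsub hu'
            have hus : u ∈ G.C s := G.mono s s' hedge hu'
            exact ⟨q, hqacc, hinitq,
              TransGen.trans_right (nSuOfRtg G hqs hus)
                (TransGen.head' ⟨hedge, hus, hu'⟩ (nSuOfRtg G hs'q huq))⟩
        · intro x hx ha
          exact (hK8 x hx ha).imp id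
            (fun h' => h'.imp id (fun h'' => h''.trans Set.subset_union_left))
      · simp at h3
      · simp at h3
  | innerRec F O I St s s' rest k h1 h2 h3 =>
    have hinv' : NInvAux G F O I St (NFrame.inner s (s' :: rest) :: k) := hinv
    clear hinv
    show NInvAux G F O I St (NFrame.callInner s' :: NFrame.inner s rest :: k)
    obtain ⟨⟨σ0, hSt0, hctrl⟩, hK1, hK2, hK3, hK4, hK5, hK6, hK7, hK8⟩ := hinv'
    subst hSt0
    rcases hctrl with hM1 | ⟨s₂, k₂, heq, _⟩ | ⟨q, σ', k₂, hσ, hseed, hM3⟩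
    · cases hM1
    · simp at heq
    · rcases hM3 with h3' | ⟨inn, t, h3', hinn⟩ | ⟨s₃, inn, t, h3', _⟩ | ⟨h3', _⟩
      · simp at h3'
      · obtain ⟨r0, inn'', rfl⟩ := nInnCtlHead hinn
        rw [List.cons_append] at h3'
        simp only [List.cons.injEq, NFrame.inner.injEq] at h3'
        obtain ⟨⟨rfl, rfl⟩, rfl⟩ := h3'
        subst hσ
        obtain ⟨h0, htop, hqσ, hqO, hqacc, hqclosed⟩ := hseed
        have hedge : s' ∈ G.succ s := nInnCtlTopSucc hinn s' (List.mem_cons_self)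
        have hsI : s ∈ I := nInnCtlTopMem hinn
        have hsO : s ∈ O := by
          rcases (Set.mem_union _ _ _).mp (hK1 hsI) with h' | h'
          · exact h'
          · exact absurd ((G.mono s s' hedge).trans h') h3
        have hs'O : s' ∈ O := by
          cases hinn with
          | base _ _ _ =>
            rcases hqclosed s' hedge with h' | h'
            · exact h'
            · exact absurd h' h3
          | step _ _ _ hsSt _ _ _ _ =>
            rcases hK2 s hsO hsSt s' hedge with h' | h'
            · exact h'
            · exact absurd h' h3
        have hnacc' : ¬ G.acc s' := by
          intro ha
          rcases hK8 s' hs'O ha with h' | h' | h'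
          · exact h1 h'
          · exact h2 h'
          · exact h3 h'
        have hctrl' : NCtrlOK G F O I {y | y ∈ q :: σ'}
            (NFrame.callInner s' :: NFrame.inner s rest :: (inn'' ++ NFrame.outerPop q :: k₂))
            (q :: σ') := by
          cases hinn with
          | base hqI hsucc hpre =>
            rename_i pre
            refine Or.inr (Or.inr ⟨s, σ', k₂, rfl, ⟨h0, htop, hqσ, hqO, hqacc, hqclosed⟩,
              Or.inr (Or.inr (Or.inl ⟨s', [NFrame.inner s rest], s, rfl,
                NInnCtl.base (pre := pre ++ [s']) hqI
                  (by rw [List.append_assoc]; exact hsucc) ?_,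
                hedge, h2, h1, h3, hs'O, hnacc'⟩))⟩)
            intro sx hsx
            rcases List.mem_append.1 hsx with hsx | hsx
            · obtain ⟨ha, hb⟩ := hpre sx hsx
              refine ⟨ha, ?_⟩
              rcases hb with hb | hb
              · rcases (Set.mem_union _ _ _).mp hb with hb | hb
                · exact Or.inl (Set.mem_union_left _ hb)
                · exact absurd hb (Set.notMem_empty _)
              · exact Or.inr hb
            · have hxs : sx = s' := by simpa using hsx
              subst hxs
              exact ⟨h1, Or.inl (Set.mem_union_right _ rfl)⟩
          | step htail hst2 hsIb hsStb haccF hactb hsucc hpre =>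
            rename_i pre
            refine Or.inr (Or.inr ⟨q, σ', k₂, rfl, ⟨h0, htop, hqσ, hqO, hqacc, hqclosed⟩,
              Or.inr (Or.inr (Or.inl ⟨s', NFrame.inner s rest :: inn'', s, rfl,
                NInnCtl.step (pre := pre ++ [s']) htail hst2 hsIb hsStb haccF hactb
                  (by rw [List.append_assoc]; exact hsucc) ?_,
                hedge, h2, h1, h3, hs'O, hnacc'⟩))⟩)
            intro sx hsx
            rcases List.mem_append.1 hsx with hsx | hsx
            · obtain ⟨ha, hb⟩ := hpre sx hsx
              refine ⟨ha, ?_⟩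
              rcases hb with hb | hb
              · rcases (Set.mem_union _ _ _).mp hb with hb | hb
                · exact Or.inl (Set.mem_union_left _ hb)
                · exact absurd hb (Set.notMem_empty _)
              · exact Or.inr hb
            · have hxs : sx = s' := by simpa using hsx
              subst hxs
              exact ⟨h1, Or.inl (Set.mem_union_right _ rfl)⟩
        have hActOld : ∀ x : S,
            x ∉ NActI (NFrame.callInner s' :: NFrame.inner s rest ::
              (inn'' ++ NFrame.outerPop q :: k₂)) →
            x ∉ NActI (NFrame.inner s (s' :: rest) :: (inn'' ++ NFrame.outerPop q :: k₂)) :=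
          fun x hxA hc => hxA (Set.mem_insert_of_mem _ hc)
        refine ⟨⟨q :: σ', rfl, hctrl'⟩, hK1, hK2, ?_, ?_, ?_, hK6,
          Or.inl (hK7.resolve_right (by simp)), hK8⟩
        · intro x hxI hxA
          exact hK3 x hxI (hActOld x hxA)
        · intro x hxI hxSt
          have hm := hK4 x hxI hxSt
          rcases List.mem_cons.1 hm with h' | h'
          · exact absurd h' (by simp)
          · exact List.mem_cons_of_mem _ (List.mem_cons_of_mem _ h')
        · intro u hu x ha hux hxI hxA hxSt
          exact hK5 u hu x ha hux hxI (hActOld x hxA) hxSt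
      · simp at h3'
      · simp at h3'
  | innerSkip F O I St s s' rest k h1 h2 =>
    have hinv' : NInvAux G F O I St (NFrame.inner s (s' :: rest) :: k) := hinv
    clear hinv
    show NInvAux G F O I St (NFrame.inner s rest :: k)
    obtain ⟨⟨σ0, hSt0, hctrl⟩, hK1, hK2, hK3, hK4, hK5, hK6, hK7, hK8⟩ := hinv'
    subst hSt0
    rcases hctrl with hM1 | ⟨s₂, k₂, heq, _⟩ | ⟨q, σ', k₂, hσ, hseed, hM3⟩
    · cases hM1
    · simp at heq
    · rcases hM3 with h3' | ⟨inn, t, h3', hinn⟩ | ⟨s₃, inn, t, h3', _⟩ | ⟨h3', _⟩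
      · simp at h3'
      · obtain ⟨r0, inn'', rfl⟩ := nInnCtlHead hinn
        rw [List.cons_append] at h3'
        simp only [List.cons.injEq, NFrame.inner.injEq] at h3'
        obtain ⟨⟨rfl, rfl⟩, rfl⟩ := h3'
        subst hσ
        obtain ⟨h0, htop, hqσ, hqO, hqacc, hqclosed⟩ := hseed
        have hctrl' : NCtrlOK G F O I {y | y ∈ q :: σ'}
            (NFrame.inner s rest :: (inn'' ++ NFrame.outerPop q :: k₂)) (q :: σ') := by
          cases hinn with
          | base hqI hsucc hpre =>
            rename_i pre
            refine Or.inr (Or.inr ⟨s, σ', k₂, rfl, ⟨h0, htop, hqσ, hqO, hqacc, hqclosed⟩,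
              Or.inr (Or.inl ⟨[NFrame.inner s rest], s, rfl,
                NInnCtl.base (pre := pre ++ [s']) hqI
                  (by rw [List.append_assoc]; exact hsucc) ?_⟩)⟩)
            intro sx hsx
            rcases List.mem_append.1 hsx with hsx | hsx
            · exact hpre sx hsx
            · have hxs : sx = s' := by simpa using hsx
              subst hxs
              exact ⟨h1, h2.imp (fun hI => Set.mem_union_left _ hI) id⟩
          | step htail hst2 hsIb hsStb haccF hactb hsucc hpre =>
            rename_i pre
            refine Or.inr (Or.inr ⟨q, σ', k₂, rfl, ⟨h0, htop, hqσ, hqO, hqacc, hqclosed⟩,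
              Or.inr (Or.inl ⟨NFrame.inner s rest :: inn'', s, rfl,
                NInnCtl.step (pre := pre ++ [s']) htail hst2 hsIb hsStb haccF hactb
                  (by rw [List.append_assoc]; exact hsucc) ?_⟩)⟩)
            intro sx hsx
            rcases List.mem_append.1 hsx with hsx | hsx
            · exact hpre sx hsx
            · have hxs : sx = s' := by simpa using hsx
              subst hxs
              exact ⟨h1, h2.imp (fun hI => Set.mem_union_left _ hI) id⟩
        refine ⟨⟨q :: σ', rfl, hctrl'⟩, hK1, hK2, ?_, ?_, ?_, hK6,
          Or.inl (hK7.resolve_right (by simp)), hK8⟩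
        · intro x hxI hxA
          exact hK3 x hxI hxA
        · intro x hxI hxSt
          have hm := hK4 x hxI hxSt
          rcases List.mem_cons.1 hm with h' | h'
          · exact absurd h' (by simp)
          · exact List.mem_cons_of_mem _ h'
        · intro u hu x ha hux hxI hxA hxSt
          exact hK5 u hu x ha hux hxI hxA hxSt
      · simp at h3'
      · simp at h3'
  | innerDone F O I St s k =>
    have hinv' : NInvAux G F O I St (NFrame.inner s [] :: k) := hinv
    clear hinv
    show NInvAux G F O I St k
    obtain ⟨⟨σ0, hSt0, hctrl⟩, hK1, hK2, hK3, hK4, hK5, hK6, hK7, hK8⟩ := hinv'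
    subst hSt0
    rcases hctrl with hM1 | ⟨s₂, k₂, heq, _⟩ | ⟨q, σ', k₂, hσ, hseed, hM3⟩
    · cases hM1
    · simp at heq
    · rcases hM3 with h3' | ⟨inn, t, h3', hinn⟩ | ⟨s₃, inn, t, h3', _⟩ | ⟨h3', _⟩
      · simp at h3'
      · obtain ⟨r0, inn'', rfl⟩ := nInnCtlHead hinn
        rw [List.cons_append] at h3'
        simp only [List.cons.injEq, NFrame.inner.injEq] at h3'
        obtain ⟨⟨rfl, rfl⟩, rfl⟩ := h3'
        subst hσ
        obtain ⟨h0, htop, hqσ, hqO, hqacc, hqclosed⟩ := hseed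
        have hsI : s ∈ I := nInnCtlTopMem hinn
        have hpack : NCtrlOK G F O I {y | y ∈ q :: σ'} (inn'' ++ NFrame.outerPop q :: k₂)
              (q :: σ') ∧
            (∀ sx ∈ G.succ s, sx ∉ ({y | y ∈ q :: σ'} : Set S) ∧ (sx ∈ I ∨ G.C sx ⊆ F)) ∧
            (G.acc s → s ∈ ({y | y ∈ q :: σ'} : Set S) ∨ G.C s ⊆ F) := by
          cases hinn with
          | base hqI hsucc hpre =>
            rw [List.append_nil] at hsucc
            refine ⟨Or.inr (Or.inr ⟨s, σ', k₂, rfl, ⟨h0, htop, hqσ, hqO, hqacc, hqclosed⟩,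
              Or.inr (Or.inr (Or.inr ⟨rfl, hsI⟩))⟩), ?_, ?_⟩
            · intro sx hsx
              rw [hsucc] at hsx
              obtain ⟨ha, hb⟩ := hpre sx hsx
              refine ⟨ha, ?_⟩
              rcases hb with hb | hb
              · rcases (Set.mem_union _ _ _).mp hb with hb | hb
                · exact Or.inl hb
                · exact absurd hb (Set.notMem_empty _)
              · exact Or.inr hb
            · intro _
              exact Or.inl (List.mem_cons_self)
          | step htail hst2 hsIb hsStb haccF hactb hsucc hpre =>
            rw [List.append_nil] at hsucc
            refine ⟨Or.inr (Or.inr ⟨q, σ', k₂, rfl, ⟨h0, htop, hqσ, hqO, hqacc, hqclosed⟩,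
              Or.inr (Or.inl ⟨inn'', _, rfl, htail⟩)⟩), ?_, fun ha => Or.inr (haccF ha)⟩
            intro sx hsx
            rw [hsucc] at hsx
            obtain ⟨ha, hb⟩ := hpre sx hsx
            refine ⟨ha, ?_⟩
            rcases hb with hb | hb
            · rcases (Set.mem_union _ _ _).mp hb with hb | hb
              · exact Or.inl hb
              · exact absurd hb (Set.notMem_empty _)
            · exact Or.inr hb
        obtain ⟨hctrl', hcl, hs5⟩ := hpack
        have hActOld : ∀ x : S, x ∉ NActI (inn'' ++ NFrame.outerPop q :: k₂) → x ≠ s →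
            x ∉ NActI (NFrame.inner s [] :: (inn'' ++ NFrame.outerPop q :: k₂)) := by
          intro x hA hxs hc
          rcases Set.mem_insert_iff.mp hc with he | hc'
          · exact hxs he
          · exact hA hc'
        refine ⟨⟨q :: σ', rfl, hctrl'⟩, hK1, hK2, ?_, ?_, ?_, hK6,
          Or.inl (hK7.resolve_right (by simp)), hK8⟩
        · intro x hxI hxA
          by_cases hxs : x = s
          · subst hxs
            exact Or.inr hcl
          · exact hK3 x hxI (hActOld x hxA hxs)
        · intro x hxI hxSt
          have hm := hK4 x hxI hxSt
          rcases List.mem_cons.1 hm with h' | h'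
          · exact absurd h' (by simp)
          · exact h'
        · intro u hu x ha hux hxI hxA hxSt
          by_cases hxs : x = s
          · subst hxs
            rcases hs5 ha with h' | h'
            · exact absurd h' hxSt
            · exact absurd (h' hux) hu
          · exact hK5 u hu x ha hux hxI (hActOld x hxA hxs) hxSt
      · simp at h3'
      · simp at h3'

private lemma nInvRun {G : NGraph S V} {c : NConfig S V}
    (h : ReflTransGen (NStep G) (initConfig G) c) : NInv G c := by
  induction h with
  | refl => exact nInvInit G
  | tail _ hstep ih => exact nInvStep hstep ih

end NDFSCorrectness


/-- The Cumulative NDFS algorithm returns a set `Accepted`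
containing `v` iff the input graph contains an accepting cycle under `v` reachable
from the initial state. -/
theorem cumulative_ndfs_partial_correctness
    [Finite S] (G : NGraph S V) (v : V) (c : NConfig S V)
    (hrun : ReflTransGen (NStep G) (initConfig G) c) (hfinal : c.ctrl = []) :
    v ∈ c.found ↔
      ∃ q : S, G.acc q ∧ ReflTransGen (Edge G) G.init q ∧
        TransGen (StepUnder G v) q q := by
  obtain ⟨⟨σ0, hSt, hctrl⟩, hK1, hK2, hK3, hK4, hK5, hK6, hK7, hK8⟩ := nInvRun hrun
  rw [hfinal] at hctrl
  have hσ : σ0 = [] := by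
    rcases hctrl with hM1 | ⟨s₂, k₂, heq, _⟩ | ⟨q, σ', k₂, hσ, hseed, hM3⟩
    · cases hM1; rfl
    · simp at heq
    · rcases hM3 with h3 | ⟨inn, t, h3, hinn⟩ | ⟨s₃, inn, t, h3, _⟩ | ⟨h3, _⟩
      · simp at h3
      · obtain ⟨r0, inn', rfl⟩ := nInnCtlHead hinn
        simp at h3
      · simp at h3
      · simp at h3
  subst hσ
  have hStE : c.stack = ∅ := by rw [hSt]; ext x; simp
  have hinitO : G.init ∈ c.outer := by
    rcases hK7 with h | h
    · exact h
    · rw [hfinal] at h; simp at h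
  constructor
  · intro hv
    exact hK6 v hv
  · rintro ⟨q, hacc, hreach, hcyc⟩
    by_contra hv
    have hvq : v ∈ G.C q := by
      cases hcyc with
      | single h => exact h.2.2
      | tail _ h => exact h.2.2
    have hOcov : ∀ y, ReflTransGen (Edge G) G.init y →
        y ∈ c.outer ∨ G.C y ⊆ c.found := by
      intro y hy
      induction hy with
      | refl => exact Or.inl hinitO
      | tail h1 e ih =>
          rcases ih with hO | hcov
          · exact hK2 _ hO (by rw [hStE]; exact Set.notMem_empty _) _ e
          · exact Or.inr ((G.mono _ _ e).trans hcov)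
    rcases hOcov q hreach with hqO | hqcov
    · have hqI : q ∈ c.inner := by
        rcases hK8 q hqO hacc with h | h | h
        · rw [hStE] at h; exact absurd h (Set.notMem_empty _)
        · exact h
        · exact absurd (h hvq) hv
      refine hK5 v hv q hacc hvq hqI ?_ ?_ hcyc
      · rw [hfinal]
        exact Set.notMem_empty _
      · rw [hStE]
        exact Set.notMem_empty _
    · exact hv (hqcov hvq)


end PTASynth
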